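/- Every proper orthochronous Lorentz matrix admits a unique rotation/boost decomposition: if L is a real 4×4 matrix with L^T η L = η, det L = 1, and L₄₄ > 0, then there exist a unique R ∈ SO(3) (i.e. R^T R = I, det R = 1) and a unique w ∈ ℝ³ such that L = 𝓡(R)·𝓑(w), where 𝓡(R) = [[R,0],[0,1]] and 𝓑(w) = [[W, w],[w^T, b]] with b = √(1+‖w‖²) and W = I + ww^T/(b+1). -/

import Mathlib

open Matrix

/-- `b = √(1+‖w‖²)`. -/
noncomputable def bOf (w : Fin 3 → ℝ) : ℝ := Real.sqrt (1 + w ⬝ᵥ w)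

/-- `W = I + w wᵀ/(b+1)`. -/
noncomputable def WOf (w : Fin 3 → ℝ) : Matrix (Fin 3) (Fin 3) ℝ :=
  1 + (bOf w + 1)⁻¹ • vecMulVec w w

lemma dot_nonneg (w : Fin 3 → ℝ) : 0 ≤ w ⬝ᵥ w :=
  Finset.sum_nonneg fun _ _ => mul_self_nonneg _
lemma bOf_sq (w : Fin 3 → ℝ) : bOf w * bOf w = 1 + w ⬝ᵥ w :=
  Real.mul_self_sqrt (by linarith [dot_nonneg w])
lemma one_le_bOf (w : Fin 3 → ℝ) : 1 ≤ bOf w := by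
  rw [show (1:ℝ) = Real.sqrt 1 by simp]
  exact Real.sqrt_le_sqrt (by linarith [dot_nonneg w])
lemma bOf_add_one_ne (w : Fin 3 → ℝ) : bOf w + 1 ≠ 0 := by
  have := one_le_bOf w; intro h; linarith
lemma bOf_neg (w : Fin 3 → ℝ) : bOf (-w) = bOf w := by simp [bOf]
lemma WOf_neg (w : Fin 3 → ℝ) : WOf (-w) = WOf w := by
  ext i j; simp [WOf, bOf_neg, vecMulVec]

lemma coef_eq (w : Fin 3 → ℝ) : (bOf w + 1)⁻¹ + (bOf w + 1)⁻¹ +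
    (bOf w + 1)⁻¹ * (bOf w + 1)⁻¹ * (w ⬝ᵥ w) = 1 := by
  have h1 := bOf_add_one_ne w
  have h2 := bOf_sq w
  set b := bOf w; set d := w ⬝ᵥ w
  field_simp
  linear_combination -h2

lemma coef_eq2 (w : Fin 3 → ℝ) : 1 + (bOf w + 1)⁻¹ * (w ⬝ᵥ w) = bOf w := by
  have h1 := bOf_add_one_ne w
  have h2 := bOf_sq w
  set b := bOf w; set d := w ⬝ᵥ w
  field_simp
  linear_combination -h2

lemma vv_mul_vv (w : Fin 3 → ℝ) :
    vecMulVec w w * vecMulVec w w = (w ⬝ᵥ w) • vecMulVec w w := by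
  ext i j
  simp only [mul_apply, vecMulVec_apply, Matrix.smul_apply, smul_eq_mul, dotProduct,
    Finset.sum_mul]
  exact Finset.sum_congr rfl fun k _ => by ring

lemma vv_symm (w : Fin 3 → ℝ) : (vecMulVec w w)ᵀ = vecMulVec w w := by
  ext i j; simp [vecMulVec, mul_comm]

lemma sum_one_mul_f (f : Fin 3 → ℝ) (i : Fin 3) :
    (∑ k, (1 : Matrix (Fin 3) (Fin 3) ℝ) i k * f k) = f i := by
  simp [Matrix.one_apply]

lemma sum_f_mul_one (f : Fin 3 → ℝ) (j : Fin 3) :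
    (∑ k, f k * (1 : Matrix (Fin 3) (Fin 3) ℝ) k j) = f j := by
  simp [Matrix.one_apply, mul_ite]

lemma W_mul_W (w : Fin 3 → ℝ) : WOf w * WOf w = 1 + vecMulVec w w := by
  ext i j
  rw [mul_apply]
  have h : ∀ k, WOf w i k * WOf w k j =
      (1 : Matrix (Fin 3) (Fin 3) ℝ) i k * (1 : Matrix (Fin 3) (Fin 3) ℝ) k j
      + (1 : Matrix (Fin 3) (Fin 3) ℝ) i k * ((bOf w + 1)⁻¹ * (w k * w j))
      + (((bOf w + 1)⁻¹ * (w i)) * w k) * (1 : Matrix (Fin 3) (Fin 3) ℝ) k j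
      + ((bOf w + 1)⁻¹ * (bOf w + 1)⁻¹ * (w i * w j)) * (w k * w k) := by
    intro k; simp [WOf, vecMulVec]; ring
  rw [Finset.sum_congr rfl fun k _ => h k, Finset.sum_add_distrib,
    Finset.sum_add_distrib, Finset.sum_add_distrib,
    sum_one_mul_f (fun k => (bOf w + 1)⁻¹ * (w k * w j)) i,
    sum_f_mul_one (fun k => ((bOf w + 1)⁻¹ * (w i)) * w k) j,
    show (∑ k, (1 : Matrix (Fin 3) (Fin 3) ℝ) i k * (1 : Matrix (Fin 3) (Fin 3) ℝ) k j)
      = (1 : Matrix (Fin 3) (Fin 3) ℝ) i j by rw [← mul_apply, one_mul],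
    ← Finset.mul_sum]
  have hd : (∑ k, w k * w k) = w ⬝ᵥ w := rfl
  rw [hd]
  simp only [Matrix.add_apply, one_apply, vecMulVec_apply]
  by_cases hij : i = j
  · subst hij
    simp only [if_pos rfl]
    linear_combination (w i * w i) * coef_eq w
  · simp only [if_neg hij]
    linear_combination (w i * w j) * coef_eq w

lemma W_symm (w : Fin 3 → ℝ) : (WOf w)ᵀ = WOf w := by
  rw [WOf, transpose_add, transpose_one, transpose_smul, vv_symm]

lemma sum_one_mul (w : Fin 3 → ℝ) (j : Fin 3) :
    (∑ k, w k * (1 : Matrix (Fin 3) (Fin 3) ℝ) k j) = w j := by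
  simp [Matrix.one_apply, mul_ite]

lemma row_mul_W (w : Fin 3 → ℝ) (j : Fin 3) :
    (∑ k, w k * WOf w k j) = bOf w * w j := by
  have h : ∀ k, w k * WOf w k j =
      w k * (1 : Matrix (Fin 3) (Fin 3) ℝ) k j + (bOf w + 1)⁻¹ * (w k * w k) * w j := by
    intro k; simp [WOf, vecMulVec]; ring
  rw [Finset.sum_congr rfl fun k _ => h k, Finset.sum_add_distrib, sum_one_mul]
  have : (∑ k, (bOf w + 1)⁻¹ * (w k * w k) * w j)
      = ((bOf w + 1)⁻¹ * (w ⬝ᵥ w)) * w j := by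
    rw [dotProduct, Finset.mul_sum, Finset.sum_mul]
  rw [this]
  linear_combination (w j) * coef_eq2 w

lemma W_mul_col (w : Fin 3 → ℝ) (i : Fin 3) :
    (∑ k, WOf w i k * w k) = bOf w * w i := by
  have h : ∀ k, WOf w i k * w k = w k * WOf w k i := by
    intro k
    have hs := congrFun (congrFun (W_symm w) i) k
    rw [transpose_apply] at hs
    rw [hs]; ring
  rw [Finset.sum_congr rfl fun k _ => h k, row_mul_W]

/-- The Minkowski metric `η = diag(1,1,1,-1)` as a block matrix. -/
noncomputable def etaM : Matrix (Fin 3 ⊕ Fin 1) (Fin 3 ⊕ Fin 1) ℝ :=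
  fromBlocks 1 0 0 (-1)

/-- The boost `𝓑(w) = [[W, w],[wᵀ, b]]`. -/
noncomputable def boostM (w : Fin 3 → ℝ) : Matrix (Fin 3 ⊕ Fin 1) (Fin 3 ⊕ Fin 1) ℝ :=
  fromBlocks (WOf w) (fun i _ => w i) (fun _ j => w j) (fun _ _ => bOf w)

/-- The rotation `𝓡(R) = [[R, 0],[0, 1]]`. -/
noncomputable def rotM (R : Matrix (Fin 3) (Fin 3) ℝ) :
    Matrix (Fin 3 ⊕ Fin 1) (Fin 3 ⊕ Fin 1) ℝ :=
  fromBlocks R 0 0 1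


lemma boost_mul_neg (w : Fin 3 → ℝ) : boostM w * boostM (-w) = 1 := by
  have hWW := W_mul_W w
  ext i j
  rcases i with i | i <;> rcases j with j | j <;>
    simp only [boostM, mul_apply, Fintype.sum_sum_type, Finset.univ_unique,
      Finset.sum_singleton, fromBlocks_apply₁₁, fromBlocks_apply₁₂,
      fromBlocks_apply₂₁, fromBlocks_apply₂₂, fromBlocks, of_apply, Sum.elim_inl, Sum.elim_inr, WOf_neg, bOf_neg, Pi.neg_apply]
  · have h := congrFun (congrFun hWW i) j
    rw [mul_apply] at h
    simp only [Matrix.one_apply, Sum.inl.injEq, Matrix.add_apply, vecMulVec_apply] at h ⊢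
    rw [h]
    by_cases hij : i = j <;> simp [hij] <;> ring
  · rw [show (∑ k, WOf w i k * -w k) = -(∑ k, WOf w i k * w k) by
      rw [← Finset.sum_neg_distrib]; exact Finset.sum_congr rfl fun k _ => by ring,
      W_mul_col w i]
    simp [Matrix.one_apply]
    ring
  · rw [row_mul_W w j]
    simp [Matrix.one_apply]
  · have hd : w ⬝ᵥ w = w 0 * w 0 + w 1 * w 1 + w 2 * w 2 := by
      simp [dotProduct, Fin.sum_univ_three]
    rw [Fin.sum_univ_three]
    simp [Matrix.one_apply, Subsingleton.elim i j]
    linear_combination bOf_sq w + hd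

lemma boost_symm (w : Fin 3 → ℝ) : (boostM w)ᵀ = boostM w := by
  ext i j
  rcases i with i | i <;> rcases j with j | j <;>
    simp only [boostM, transpose_apply, fromBlocks_apply₁₁, fromBlocks_apply₁₂,
      fromBlocks_apply₂₁, fromBlocks_apply₂₂, fromBlocks, of_apply, Sum.elim_inl, Sum.elim_inr]
  have h := congrFun (congrFun (W_symm w) j) i
  rw [transpose_apply] at h
  exact h.symm

lemma boost_mul_eta (w : Fin 3 → ℝ) : boostM w * etaM =
    fromBlocks (WOf w) (fun i _ => -w i) (fun _ j => w j) (fun _ _ => -bOf w) := by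
  ext i j
  rcases i with i | i <;> rcases j with j | j <;>
    simp only [boostM, etaM, mul_apply, Fintype.sum_sum_type, Finset.univ_unique,
      Finset.sum_singleton, fromBlocks_apply₁₁, fromBlocks_apply₁₂,
      fromBlocks_apply₂₁, fromBlocks_apply₂₂, fromBlocks, of_apply, Sum.elim_inl, Sum.elim_inr, Matrix.zero_apply, mul_zero, mul_one,
      Finset.sum_const_zero, add_zero, zero_add, Matrix.neg_apply, mul_neg]
  · exact sum_f_mul_one (fun k => WOf w i k) j
  · simp [Matrix.one_apply, show j = 0 from Subsingleton.elim j 0]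
  · exact sum_f_mul_one w j
  · simp [Matrix.one_apply, show j = 0 from Subsingleton.elim j 0]

lemma eta_mul_eta : etaM * etaM = 1 := by
  ext i j
  rcases i with i | i <;> rcases j with j | j <;>
    simp [etaM, mul_apply, Fintype.sum_sum_type, fromBlocks, Matrix.one_apply]
  simp [show j = 0 from Subsingleton.elim j 0]

lemma boost_eta_boost (w : Fin 3 → ℝ) : boostM w * etaM * boostM w = etaM := by
  rw [boost_mul_eta]
  have hWW := W_mul_W w
  ext i j
  rcases i with i | i <;> rcases j with j | j <;>
    simp only [boostM, etaM, mul_apply, Fintype.sum_sum_type, Finset.univ_unique,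
      Finset.sum_singleton, fromBlocks_apply₁₁, fromBlocks_apply₁₂,
      fromBlocks_apply₂₁, fromBlocks_apply₂₂, fromBlocks, of_apply, Sum.elim_inl, Sum.elim_inr, Pi.neg_apply]
  · have h := congrFun (congrFun hWW i) j
    rw [mul_apply] at h
    simp only [Matrix.one_apply, Sum.inl.injEq, Matrix.add_apply, vecMulVec_apply] at h ⊢
    rw [h]
    by_cases hij : i = j <;> simp [hij] <;> ring
  · rw [W_mul_col w i]
    simp [Matrix.one_apply]
    ring
  · rw [row_mul_W w j]
    simp [Matrix.one_apply]
  · have hd : w ⬝ᵥ w = w 0 * w 0 + w 1 * w 1 + w 2 * w 2 := by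
      simp [dotProduct, Fin.sum_univ_three]
    rw [Fin.sum_univ_three]
    simp [Matrix.one_apply, Subsingleton.elim i j]
    linear_combination -bOf_sq w - hd

lemma bOf_pos (w : Fin 3 → ℝ) : 0 < bOf w := lt_of_lt_of_le one_pos (one_le_bOf w)

lemma boost_det (w : Fin 3 → ℝ) : (boostM w).det = 1 := by
  have hbne : bOf w ≠ 0 := ne_of_gt (bOf_pos w)
  have hrinv : (Matrix.of fun _ _ => bOf w : Matrix (Fin 1) (Fin 1) ℝ) *
      (Matrix.of fun _ _ => (bOf w)⁻¹) = 1 := by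
    ext i j
    simp [mul_apply, Matrix.one_apply, show i = j from Subsingleton.elim i j,
      mul_inv_cancel₀ hbne]
  haveI := invertibleOfRightInverse _ _ hrinv
  have hinv : ⅟ (Matrix.of fun _ _ => bOf w : Matrix (Fin 1) (Fin 1) ℝ)
      = Matrix.of fun _ _ => (bOf w)⁻¹ := invOf_eq_right_inv hrinv
  have hBd : boostM w = fromBlocks (WOf w) (Matrix.of fun i _ => w i)
      (Matrix.of fun _ j => w j) (Matrix.of fun _ _ => bOf w) := rfl
  rw [hBd, det_fromBlocks₂₂, hinv]
  have key : WOf w - ((Matrix.of fun i _ => w i) : Matrix (Fin 3) (Fin 1) ℝ)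
        * ((Matrix.of fun _ _ => (bOf w)⁻¹) : Matrix (Fin 1) (Fin 1) ℝ)
        * ((Matrix.of fun _ j => w j) : Matrix (Fin 1) (Fin 3) ℝ)
      = 1 + vecMulVec (((bOf w + 1)⁻¹ - (bOf w)⁻¹) • w) w := by
    ext i j
    simp only [Matrix.sub_apply, Matrix.add_apply, mul_apply, Finset.univ_unique,
      Finset.sum_singleton, Matrix.of_apply, WOf, vecMulVec_apply,
      Matrix.smul_apply, Pi.smul_apply, smul_eq_mul]
    ring
  rw [key, vecMulVec_eq (Fin 1), det_one_add_replicateCol_mul_replicateRow, det_fin_one]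
  have hd2 : w ⬝ᵥ (((bOf w + 1)⁻¹ - (bOf w)⁻¹) • w)
      = ((bOf w + 1)⁻¹ - (bOf w)⁻¹) * (w ⬝ᵥ w) := dotProduct_smul _ _ _
  rw [hd2]
  have h1 := bOf_add_one_ne w
  have h2 := bOf_sq w
  set b := bOf w; set d := w ⬝ᵥ w
  field_simp
  ring_nf
  simp only [Matrix.of_apply]
  linear_combination b * h2

/-- every proper orthochronous Lorentz matrix `L` has a unique
decomposition `L = 𝓡(R)·𝓑(w)` with `R ∈ SO(3)` and `w ∈ ℝ³`. -/
theorem lorentz_rotation_boost_decomposition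
    (L : Matrix (Fin 3 ⊕ Fin 1) (Fin 3 ⊕ Fin 1) ℝ)
    (hL : Lᵀ * etaM * L = etaM) (hdet : L.det = 1)
    (hL44 : 0 < L (Sum.inr 0) (Sum.inr 0)) :
    ∃! p : Matrix (Fin 3) (Fin 3) ℝ × (Fin 3 → ℝ),
      (p.1ᵀ * p.1 = 1 ∧ p.1.det = 1) ∧ L = rotM p.1 * boostM p.2 := by
  classical
  set w : Fin 3 → ℝ := fun j => L (Sum.inr 0) (Sum.inl j) with hw
  -- L is invertible with inverse η Lᵀ η, hence L η Lᵀ = η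
  have hinv1 : (etaM * Lᵀ * etaM) * L = 1 := by
    calc etaM * Lᵀ * etaM * L = etaM * (Lᵀ * etaM * L) := by
          simp only [Matrix.mul_assoc]
      _ = 1 := by rw [hL, eta_mul_eta]
  have hinv2 : L * (etaM * Lᵀ * etaM) = 1 := mul_eq_one_comm.mp hinv1
  have hLL : L * etaM * Lᵀ = etaM := by
    calc L * etaM * Lᵀ = L * etaM * Lᵀ * (etaM * etaM) := by
          rw [eta_mul_eta, Matrix.mul_one]
      _ = (L * (etaM * Lᵀ * etaM)) * etaM := by simp only [Matrix.mul_assoc]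
      _ = etaM := by rw [hinv2, Matrix.one_mul]
  -- the (4,4) entry
  have hd3 : w ⬝ᵥ w = w 0 * w 0 + w 1 * w 1 + w 2 * w 2 := by
    simp [dotProduct, Fin.sum_univ_three]
  have hb44 : L (Sum.inr 0) (Sum.inr 0) * L (Sum.inr 0) (Sum.inr 0)
      = 1 + w ⬝ᵥ w := by
    have h := congrFun (congrFun hLL (Sum.inr (0 : Fin 1))) (Sum.inr 0)
    simp only [Matrix.mul_apply, Fintype.sum_sum_type, Fin.sum_univ_one, etaM, fromBlocks_apply₁₁, fromBlocks_apply₁₂,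
      fromBlocks_apply₂₁, fromBlocks_apply₂₂, fromBlocks, of_apply, Sum.elim_inl, Sum.elim_inr, transpose_apply, Matrix.zero_apply,
      Matrix.neg_apply, Matrix.one_apply, mul_ite, mul_one, mul_zero, ite_mul,
      zero_mul, one_mul, mul_neg, neg_mul, Finset.sum_ite_eq,
      Finset.sum_ite_eq', Finset.mem_univ, if_true, Finset.sum_const_zero,
      add_zero, zero_add, Fin.sum_univ_three] at h
    norm_num [Fin.ext_iff] at h
    rw [hd3]
    linarith [h]
  have hbe : L (Sum.inr 0) (Sum.inr 0) = bOf w := by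
    nlinarith [bOf_sq w, bOf_pos w, hL44, hb44]
  -- the candidate rotation part
  set M : Matrix (Fin 3 ⊕ Fin 1) (Fin 3 ⊕ Fin 1) ℝ := L * boostM (-w) with hM
  have hMB : M * boostM w = L := by
    rw [hM, Matrix.mul_assoc]
    have h := boost_mul_neg (-w)
    rw [neg_neg] at h
    rw [h, Matrix.mul_one]
  have hMeta : Mᵀ * etaM * M = etaM := by
    rw [hM, transpose_mul, boost_symm]
    calc boostM (-w) * Lᵀ * etaM * (L * boostM (-w))
        = boostM (-w) * ((Lᵀ * etaM * L) * boostM (-w)) := by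
          simp only [Matrix.mul_assoc]
      _ = boostM (-w) * etaM * boostM (-w) := by
          rw [hL, Matrix.mul_assoc]
      _ = etaM := boost_eta_boost _
  have hMrow : ∀ j : Fin 3, M (Sum.inr 0) (Sum.inl j) = 0 := by
    intro j
    show (L * boostM (-w)) (Sum.inr 0) (Sum.inl j) = 0
    rw [mul_apply]
    rw [Fintype.sum_sum_type]
    simp only [Fin.sum_univ_one, boostM,
      fromBlocks_apply₁₁, fromBlocks_apply₂₁, WOf_neg, fromBlocks, of_apply, Sum.elim_inl, Sum.elim_inr, Pi.neg_apply]
    have : (∑ i : Fin 3, L (Sum.inr 0) (Sum.inl i) * WOf w i j)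
        = ∑ i : Fin 3, w i * WOf w i j := rfl
    rw [this, row_mul_W, hbe]
    show bOf w * w j + bOf w * -w j = 0
    ring
  have hM44 : M (Sum.inr 0) (Sum.inr 0) = 1 := by
    show (L * boostM (-w)) (Sum.inr 0) (Sum.inr 0) = 1
    rw [mul_apply, Fintype.sum_sum_type]
    simp only [Fin.sum_univ_one, boostM,
      fromBlocks_apply₁₂, fromBlocks_apply₂₂, bOf_neg, fromBlocks, of_apply, Sum.elim_inl, Sum.elim_inr, Pi.neg_apply]
    have : (∑ i : Fin 3, L (Sum.inr 0) (Sum.inl i) * -w i)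
        = ∑ i : Fin 3, w i * -w i := rfl
    rw [this, hbe, Fin.sum_univ_three]
    nlinarith [bOf_sq w, hd3]
  have hMcol : ∀ i : Fin 3, M (Sum.inl i) (Sum.inr 0) = 0 := by
    have h := congrFun (congrFun hMeta (Sum.inr (0 : Fin 1))) (Sum.inr 0)
    simp only [Matrix.mul_apply, Fintype.sum_sum_type, Fin.sum_univ_one, etaM, fromBlocks_apply₁₁, fromBlocks_apply₁₂,
      fromBlocks_apply₂₁, fromBlocks_apply₂₂, fromBlocks, of_apply, Sum.elim_inl, Sum.elim_inr, transpose_apply, Matrix.zero_apply,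
      Matrix.neg_apply, Matrix.one_apply, mul_ite, mul_one, mul_zero, ite_mul,
      zero_mul, one_mul, mul_neg, neg_mul, Finset.sum_ite_eq,
      Finset.sum_ite_eq', Finset.mem_univ, if_true, Finset.sum_const_zero,
      add_zero, zero_add, Fin.sum_univ_three, hM44] at h
    norm_num [Fin.ext_iff] at h
    have n0 := mul_self_nonneg (M (Sum.inl 0) (Sum.inr 0))
    have n1 := mul_self_nonneg (M (Sum.inl 1) (Sum.inr 0))
    have n2 := mul_self_nonneg (M (Sum.inl 2) (Sum.inr 0))
    have e0 : M (Sum.inl 0) (Sum.inr 0) = 0 :=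
      mul_self_eq_zero.mp (by linarith)
    have e1 : M (Sum.inl 1) (Sum.inr 0) = 0 :=
      mul_self_eq_zero.mp (by linarith)
    have e2 : M (Sum.inl 2) (Sum.inr 0) = 0 :=
      mul_self_eq_zero.mp (by linarith)
    intro i
    fin_cases i
    exacts [e0, e1, e2]
  set R : Matrix (Fin 3) (Fin 3) ℝ := M.toBlocks₁₁ with hR
  have hMR : M = rotM R := by
    ext i j
    rcases i with i | i <;> rcases j with j | j
    · rfl
    · obtain rfl : j = 0 := Subsingleton.elim j 0
      rw [hMcol i]
      simp [rotM]
    · obtain rfl : i = 0 := Subsingleton.elim i 0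
      rw [hMrow j]
      simp [rotM]
    · obtain rfl : i = 0 := Subsingleton.elim i 0
      obtain rfl : j = 0 := Subsingleton.elim j 0
      rw [hM44]
      simp [rotM, Matrix.one_apply]
  have hRortho : Rᵀ * R = 1 := by
    have h2 : fromBlocks (Rᵀ * R) (0 : Matrix (Fin 3) (Fin 1) ℝ)
        (0 : Matrix (Fin 1) (Fin 3) ℝ) (-1) = fromBlocks 1 0 0 (-1) := by
      calc fromBlocks (Rᵀ * R) 0 0 (-1) = (rotM R)ᵀ * etaM * rotM R := by
            rw [rotM, etaM, fromBlocks_transpose, fromBlocks_multiply,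
              fromBlocks_multiply]
            simp
        _ = etaM := by rw [← hMR]; exact hMeta
    have := congrArg Matrix.toBlocks₁₁ h2
    simpa [toBlocks_fromBlocks₁₁] using this
  have hRdet : R.det = 1 := by
    have h1 : M.det = 1 := by
      rw [hM, det_mul, hdet, boost_det, one_mul]
    rw [hMR, rotM] at h1
    rw [← h1, det_fromBlocks_zero₂₁]
    simp
  refine ⟨(R, w), ⟨⟨hRortho, hRdet⟩, ?_⟩, ?_⟩
  · show L = rotM R * boostM w
    rw [← hMR, hMB]
  · rintro ⟨R', w'⟩ ⟨⟨hR'o, hR'd⟩, hL'⟩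
    have hw' : w' = w := by
      funext j
      have h := congrFun (congrFun hL' (Sum.inr (0 : Fin 1))) (Sum.inl j)
      simp only [Matrix.mul_apply, Fintype.sum_sum_type, Finset.univ_unique,
        Finset.sum_singleton, rotM, boostM, fromBlocks_apply₁₁,
        fromBlocks_apply₁₂, fromBlocks_apply₂₁, fromBlocks_apply₂₂, fromBlocks, of_apply, Sum.elim_inl, Sum.elim_inr,
        Matrix.zero_apply, zero_mul, Finset.sum_const_zero, zero_add,
        Matrix.one_apply, ite_mul, one_mul, mul_one] at h
      simp at h
      exact h.symm
    have hR'M : rotM R' = M := by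
      have hpull : rotM R' * boostM w' * boostM (-w') = rotM R' := by
        rw [Matrix.mul_assoc, boost_mul_neg, Matrix.mul_one]
      rw [← hpull, ← hL', hw', ← hM]
    have hR' : R' = R := by
      have h := congrArg Matrix.toBlocks₁₁ hR'M
      rw [rotM, toBlocks_fromBlocks₁₁] at h
      exact h
    exact Prod.ext hR' hw'
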